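/- arXiv:2403.02275 — 7 statements merged into one kernel-verified Lean document; each statement's English description precedes it below -/
import Mathlib

section
/- Let G = (L ⊔ R, E) be an (r, Δ, c)-boundary expander with c > 0 and let J ⊆ R with |J| ≤ cr/2. Then the (r, J)-contained set of maximal size is unique: any two (r, J)-contained sets of maximal size are equal. -/
open Finset

variable {L R : Type*} [Fintype L] [Fintype R] [DecidableEq L] [DecidableEq R]

/-- The set of neighbours of `I ⊆ L` in the bipartite graph with adjacency `A`. -/
def nbhd (A : L → R → Prop) [∀ a b, Decidable (A a b)] (I : Finset L) : Finset R :=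
  Finset.univ.filter (fun b => ∃ a ∈ I, A a b)

/-- The boundary of `I ⊆ L`: vertices of `R` adjacent to exactly one vertex of `I`. -/
def bdry (A : L → R → Prop) [∀ a b, Decidable (A a b)] (I : Finset L) : Finset R :=
  Finset.univ.filter (fun b => (I.filter (fun a => A a b)).card = 1)

/-- Degree of a left vertex. -/
def ldeg (A : L → R → Prop) [∀ a b, Decidable (A a b)] (a : L) : ℕ :=
  (Finset.univ.filter (fun b => A a b)).card

/-- `(r, Δ, c)`-boundary expander. -/
def IsBoundaryExpander (A : L → R → Prop) [∀ a b, Decidable (A a b)] (r Δ : ℕ) (c : ℝ) : Prop :=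
  (∀ a : L, ldeg A a ≤ Δ) ∧
  ∀ I : Finset L, I.card ≤ r → c * I.card ≤ ((bdry A I).card : ℝ)

/-- `I` is `(r, J)`-contained: `|I| ≤ r` and `∂(I) ⊆ J`. -/
def IsContained (A : L → R → Prop) [∀ a b, Decidable (A a b)] (r : ℕ) (J : Finset R) (I : Finset L) : Prop :=
  I.card ≤ r ∧ bdry A I ⊆ J

/-- `I` is a closure of `J`: an `(r, J)`-contained set of maximal size. -/
def IsClosure (A : L → R → Prop) [∀ a b, Decidable (A a b)] (r : ℕ) (J : Finset R) (I : Finset L) : Prop :=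
  IsContained A r J I ∧ ∀ I' : Finset L, IsContained A r J I' → I'.card ≤ I.card

/-- `(r, Δ, c)`-weak (boundary) expander. -/
def IsWeakExpander (A : L → R → Prop) [∀ a b, Decidable (A a b)] (r Δ : ℕ) (c : ℝ) : Prop :=
  (∀ a : L, ldeg A a ≤ Δ) ∧
  (∀ I : Finset L, I.Nonempty → (I.card : ℝ) ≤ r / 2 → (bdry A I).Nonempty) ∧
  (∀ I : Finset L, (r : ℝ) / 2 < I.card → I.card ≤ r → c * I.card ≤ ((bdry A I).card : ℝ))

lemma bdry_union_subset (A : L → R → Prop) [∀ a b, Decidable (A a b)] (I₁ I₂ : Finset L) :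
    bdry A (I₁ ∪ I₂) ⊆ bdry A I₁ ∪ bdry A I₂ := by
  intro b hb
  simp only [bdry, mem_filter, mem_univ, true_and] at hb
  obtain ⟨a, ha⟩ := Finset.card_eq_one.mp hb
  have haU : a ∈ (I₁ ∪ I₂).filter (fun a => A a b) := ha ▸ Finset.mem_singleton_self a
  have haA : A a b := (Finset.mem_filter.mp haU).2
  have haI : a ∈ I₁ ∪ I₂ := (Finset.mem_filter.mp haU).1
  simp only [Finset.mem_union, bdry, mem_filter, mem_univ, true_and]
  rcases Finset.mem_union.mp haI with h | h
  · left
    have hsub : I₁.filter (fun a => A a b) ⊆ {a} := ha ▸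
      Finset.filter_subset_filter _ (Finset.subset_union_left)
    have hmem : a ∈ I₁.filter (fun a => A a b) := Finset.mem_filter.mpr ⟨h, haA⟩
    rw [Finset.eq_singleton_iff_unique_mem.mpr ⟨hmem, fun x hx => Finset.mem_singleton.mp (hsub hx)⟩]
    simp
  · right
    have hsub : I₂.filter (fun a => A a b) ⊆ {a} := ha ▸
      Finset.filter_subset_filter _ (Finset.subset_union_right)
    have hmem : a ∈ I₂.filter (fun a => A a b) := Finset.mem_filter.mpr ⟨h, haA⟩
    rw [Finset.eq_singleton_iff_unique_mem.mpr ⟨hmem, fun x hx => Finset.mem_singleton.mp (hsub hx)⟩]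
    simp

/-- In an `(r, Δ, c)`-boundary expander, for `|J| ≤ cr/2` the
`(r, J)`-contained set of maximal size is unique. -/
theorem closure_unique (A : L → R → Prop) [∀ a b, Decidable (A a b)]
    (r Δ : ℕ) (c : ℝ) (hc : 0 < c)
    (hexp : IsBoundaryExpander A r Δ c)
    (J : Finset R) (hJ : (J.card : ℝ) ≤ c * r / 2)
    (I₁ I₂ : Finset L) (h₁ : IsClosure A r J I₁) (h₂ : IsClosure A r J I₂) :
    I₁ = I₂ := by
  -- each closure has size ≤ r/2
  have half : ∀ I : Finset L, IsClosure A r J I → (I.card : ℝ) ≤ r / 2 := by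
    intro I hI
    have h1 : c * I.card ≤ ((bdry A I).card : ℝ) := hexp.2 I hI.1.1
    have h2 : ((bdry A I).card : ℝ) ≤ J.card :=
      Nat.cast_le.mpr (Finset.card_le_card hI.1.2)
    have : c * I.card ≤ c * (r / 2) := by
      calc c * I.card ≤ (J.card : ℝ) := h1.trans h2
        _ ≤ c * r / 2 := hJ
        _ = c * (r / 2) := by ring
    exact le_of_mul_le_mul_left this hc
  have hcardU : (I₁ ∪ I₂).card ≤ r := by
    have : ((I₁ ∪ I₂).card : ℝ) ≤ r := by
      calc ((I₁ ∪ I₂).card : ℝ) ≤ (I₁.card : ℝ) + I₂.card := by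
            exact_mod_cast Finset.card_union_le I₁ I₂
        _ ≤ r / 2 + r / 2 := add_le_add (half I₁ h₁) (half I₂ h₂)
        _ = r := by ring
    exact_mod_cast this
  have hcont : IsContained A r J (I₁ ∪ I₂) := by
    refine ⟨hcardU, ?_⟩
    intro b hb
    rcases Finset.mem_union.mp (bdry_union_subset A I₁ I₂ hb) with h | h
    · exact h₁.1.2 h
    · exact h₂.1.2 h
  have e1 : I₁ = I₁ ∪ I₂ :=
    Finset.eq_of_subset_of_card_le Finset.subset_union_left (h₁.2 _ hcont)
  have e2 : I₂ = I₁ ∪ I₂ :=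
    Finset.eq_of_subset_of_card_le Finset.subset_union_right (h₂.2 _ hcont)
  exact e1.trans e2.symm
end

section
/- Let G = (L ⊔ R, E) be an (r, Δ, c)-boundary expander with c > 0, and let J' ⊆ J ⊆ R with |J| ≤ cr/2. Then the closure of J' is contained in the closure of J, where the closure of a set S ⊆ R is the unique (r, S)-contained subset of L of maximal size. -/
open Finset

variable {L R : Type*} [Fintype L] [Fintype R] [DecidableEq L] [DecidableEq R]

/-- In an `(r, Δ, c)`-boundary expander, for `J' ⊆ J` with `|J| ≤ cr/2`,
the closure of `J'` is contained in the closure of `J`. -/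
theorem closure_monotone (A : L → R → Prop) [∀ a b, Decidable (A a b)]
    (r Δ : ℕ) (c : ℝ) (hc : 0 < c)
    (hexp : IsBoundaryExpander A r Δ c)
    (J' J : Finset R) (hJJ : J' ⊆ J) (hJ : (J.card : ℝ) ≤ c * r / 2)
    (I' I : Finset L) (h' : IsClosure A r J' I') (h : IsClosure A r J I) :
    I' ⊆ I := by
  -- boundary of a union is contained in the union of boundaries
  have bdry_union : bdry A (I' ∪ I) ⊆ bdry A I' ∪ bdry A I := by
    intro b hb
    simp only [bdry, mem_filter, mem_univ, true_and, mem_union] at hb ⊢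
    rw [filter_union] at hb
    have h1 : (I'.filter (fun a => A a b)).card ≤ 1 :=
      le_trans (card_le_card subset_union_left) hb.le
    have h2 : (I.filter (fun a => A a b)).card ≤ 1 :=
      le_trans (card_le_card subset_union_right) hb.le
    have h3 := card_union_le (I'.filter (fun a => A a b)) (I.filter (fun a => A a b))
    omega
  -- any (r, J)-contained set has size ≤ r/2
  have half : ∀ K : Finset L, IsContained A r J K → (K.card : ℝ) ≤ r / 2 := by
    intro K hK
    have hexpK := hexp.2 K hK.1
    have hbd : ((bdry A K).card : ℝ) ≤ (J.card : ℝ) := by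
      exact_mod_cast card_le_card hK.2
    have : c * K.card ≤ c * r / 2 := le_trans hexpK (le_trans hbd hJ)
    nlinarith
  -- I' is (r, J)-contained
  have hI'J : IsContained A r J I' := ⟨h'.1.1, h'.1.2.trans hJJ⟩
  -- the union I' ∪ I is (r, J)-contained
  have hunion : IsContained A r J (I' ∪ I) := by
    constructor
    · have h1 := half I' hI'J
      have h2 := half I h.1
      have hcu : ((I' ∪ I).card : ℝ) ≤ (r : ℝ) := by
        have := card_union_le I' I
        have : ((I' ∪ I).card : ℝ) ≤ (I'.card : ℝ) + (I.card : ℝ) := by exact_mod_cast this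
        linarith
      exact_mod_cast hcu
    · exact bdry_union.trans (union_subset hI'J.2 h.1.2)
  -- by maximality of I, the union has size ≤ |I|, hence equals I
  have hle := h.2 _ hunion
  have heq : I' ∪ I = I :=
    (eq_of_subset_of_card_le subset_union_right hle).symm
  rw [← heq]
  exact subset_union_left
end

section
/- Let G = (L ⊔ R, E) be an (r, Δ, c)-weak expander, i.e., all left-degrees are ≤ Δ, every I ⊆ L with 0 < |I| ≤ r/2 has nonempty boundary, and every I ⊆ L with r/2 < |I| ≤ r has |∂(I)| ≥ c|I|. If I ⊆ L is a closure of J ⊆ R (an (r, J)-contained set of maximal size), then |I| ≤ max(|J|/c, r/2). -/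
open Finset

variable {L R : Type*} [Fintype L] [Fintype R] [DecidableEq L] [DecidableEq R]

/-- In an `(r, Δ, c)`-weak expander, any closure `I` of `J ⊆ R`
satisfies `|I| ≤ max (|J|/c) (r/2)`. -/
theorem weak_closure_card_le (A : L → R → Prop) [∀ a b, Decidable (A a b)]
    (r Δ : ℕ) (c : ℝ) (hc : 0 < c)
    (hexp : IsWeakExpander A r Δ c)
    (J : Finset R) (I : Finset L) (hI : IsClosure A r J I) :
    (I.card : ℝ) ≤ max ((J.card : ℝ) / c) ((r : ℝ) / 2) := by
  rcases le_or_gt (I.card : ℝ) ((r : ℝ) / 2) with h | h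
  · exact le_max_of_le_right h
  · have hIr : I.card ≤ r := hI.1.1
    have hb := hexp.2.2 I h hIr
    have hJ : (bdry A I).card ≤ J.card := Finset.card_le_card hI.1.2
    have : c * I.card ≤ (J.card : ℝ) := hb.trans (by exact_mod_cast hJ)
    exact le_max_of_le_left ((le_div_iff₀' hc).mpr this)
end

section
/- Let G = (L ⊔ R, E) be an (r, Δ, c)-weak expander with c > 0, and let J ⊆ R with |J| ≤ cr/2. Then any two closures of J (i.e., (r, J)-contained sets of maximal size) coincide; in other words, the closure of J is unique. -/
open Finset

variable {L R : Type*} [Fintype L] [Fintype R] [DecidableEq L] [DecidableEq R]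

/-- In an `(r, Δ, c)`-weak expander, for `|J| ≤ cr/2` any two closures
of `J` coincide. -/
theorem weak_closure_unique (A : L → R → Prop) [∀ a b, Decidable (A a b)]
    (r Δ : ℕ) (c : ℝ) (hc : 0 < c)
    (hexp : IsWeakExpander A r Δ c)
    (J : Finset R) (hJ : (J.card : ℝ) ≤ c * r / 2)
    (I₁ I₂ : Finset L) (h₁ : IsClosure A r J I₁) (h₂ : IsClosure A r J I₂) :
    I₁ = I₂ := by
  obtain ⟨_, _, hbig⟩ := hexp
  -- every (r,J)-contained set has size ≤ r/2
  have small : ∀ I : Finset L, IsContained A r J I → (I.card : ℝ) ≤ (r : ℝ) / 2 := by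
    intro I ⟨hIr, hIb⟩
    by_contra h
    push_neg at h
    have h1 : c * I.card ≤ ((bdry A I).card : ℝ) := hbig I h hIr
    have h2 : ((bdry A I).card : ℝ) ≤ (J.card : ℝ) :=
      Nat.cast_le.2 (card_le_card hIb)
    have : c * I.card ≤ c * r / 2 := le_trans h1 (le_trans h2 hJ)
    have : (I.card : ℝ) ≤ (r : ℝ) / 2 := by
      rw [mul_div_assoc] at this
      exact le_of_mul_le_mul_left this hc
    linarith
  have hcard : ((I₁ ∪ I₂).card : ℝ) ≤ (r : ℝ) := by
    calc ((I₁ ∪ I₂).card : ℝ) ≤ (I₁.card : ℝ) + (I₂.card : ℝ) := by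
          exact_mod_cast Nat.cast_le.2 (card_union_le I₁ I₂)
      _ ≤ (r : ℝ) / 2 + (r : ℝ) / 2 := add_le_add (small I₁ h₁.1) (small I₂ h₂.1)
      _ = (r : ℝ) := by ring
  have hcardN : (I₁ ∪ I₂).card ≤ r := by exact_mod_cast hcard
  have hcont : IsContained A r J (I₁ ∪ I₂) :=
    ⟨hcardN, (bdry_union_subset A I₁ I₂).trans (union_subset h₁.1.2 h₂.1.2)⟩
  have e₁ : I₁ = I₁ ∪ I₂ :=
    eq_of_subset_of_card_le subset_union_left (h₁.2 _ hcont)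
  have e₂ : I₂ = I₁ ∪ I₂ :=
    eq_of_subset_of_card_le subset_union_right (h₂.2 _ hcont)
  exact e₁.trans e₂.symm
end

section
/- Let G = (L ⊔ R, E) be an (r, Δ, c)-weak expander with c > 0, and let J' ⊆ J ⊆ R with |J| ≤ cr/2. Then Cl(J') ⊆ Cl(J), where Cl(S) denotes the unique maximal (r, S)-contained subset of L. -/
open Finset

variable {L R : Type*} [Fintype L] [Fintype R] [DecidableEq L] [DecidableEq R]

/-- In an `(r, Δ, c)`-weak expander, for `J' ⊆ J` with `|J| ≤ cr/2`,
`Cl(J') ⊆ Cl(J)`. -/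
theorem weak_closure_monotone (A : L → R → Prop) [∀ a b, Decidable (A a b)]
    (r Δ : ℕ) (c : ℝ) (hc : 0 < c)
    (hexp : IsWeakExpander A r Δ c)
    (J' J : Finset R) (hJJ : J' ⊆ J) (hJ : (J.card : ℝ) ≤ c * r / 2)
    (I' I : Finset L) (h' : IsClosure A r J' I') (h : IsClosure A r J I) :
    I' ⊆ I := by
  obtain ⟨⟨hI'r, hI'b⟩, hI'max⟩ := h'
  obtain ⟨⟨hIr, hIb⟩, hImax⟩ := h
  have hsize : ∀ K : Finset L, IsContained A r J K → (K.card : ℝ) ≤ r / 2 := by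
    rintro K ⟨hKr, hKb⟩
    by_contra hgt
    push_neg at hgt
    have h1 := hexp.2.2 K hgt hKr
    have h2 : ((bdry A K).card : ℝ) ≤ J.card := by
      exact_mod_cast Finset.card_le_card hKb
    nlinarith
  have hI2 : (I.card : ℝ) ≤ r / 2 := hsize I ⟨hIr, hIb⟩
  have hI'2 : (I'.card : ℝ) ≤ r / 2 := hsize I' ⟨hI'r, fun b hb => hJJ (hI'b hb)⟩
  have hUr : (I ∪ I').card ≤ r := by
    have h3 : ((I ∪ I').card : ℝ) ≤ (I.card : ℝ) + I'.card := by
      exact_mod_cast Finset.card_union_le I I'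
    have : ((I ∪ I').card : ℝ) ≤ r := by linarith
    exact_mod_cast this
  have hUb : bdry A (I ∪ I') ⊆ J := by
    intro b hb
    simp only [bdry, Finset.mem_filter, Finset.mem_univ, true_and] at hb
    rw [Finset.filter_union] at hb
    obtain ⟨a, ha⟩ := Finset.card_eq_one.mp hb
    have haI : a ∈ I.filter (fun a => A a b) ∪ I'.filter (fun a => A a b) := by
      rw [ha]; exact Finset.mem_singleton_self a
    rcases Finset.mem_union.mp haI with h1 | h1
    · apply hIb
      simp only [bdry, Finset.mem_filter, Finset.mem_univ, true_and]
      have hsub : I.filter (fun a => A a b) ⊆ {a} := by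
        rw [← ha]; exact Finset.subset_union_left
      rcases Finset.subset_singleton_iff.mp hsub with h2 | h2
      · exact absurd h1 (by simp [h2])
      · rw [h2]; simp
    · apply hJJ; apply hI'b
      simp only [bdry, Finset.mem_filter, Finset.mem_univ, true_and]
      have hsub : I'.filter (fun a => A a b) ⊆ {a} := by
        rw [← ha]; exact Finset.subset_union_right
      rcases Finset.subset_singleton_iff.mp hsub with h2 | h2
      · exact absurd h1 (by simp [h2])
      · rw [h2]; simp
  have hcard := hImax (I ∪ I') ⟨hUr, hUb⟩
  have heq : I = I ∪ I' := Finset.eq_of_subset_of_card_le Finset.subset_union_left hcard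
  intro x hx
  rw [heq]
  exact Finset.mem_union_right _ hx
end

section
/- Let G = (L ⊔ R, E) be an (r, Δ, c)-weak expander and J ⊆ R with |Ext(J)| ≤ cr/2, where Ext(J) := J ∪ N(Cl(J)). Then Cl(Ext(J)) = Cl(J). -/
open Finset

variable {L R : Type*} [Fintype L] [Fintype R] [DecidableEq L] [DecidableEq R]

lemma card_le_half_aux {L R : Type*} [Fintype L] [Fintype R] [DecidableEq L] [DecidableEq R]
    (A : L → R → Prop) [∀ a b, Decidable (A a b)]
    (r Δ : ℕ) (c : ℝ) (hc : 0 < c) (hexp : IsWeakExpander A r Δ c)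
    (E : Finset R) (hE : (E.card : ℝ) ≤ c * r / 2)
    (K : Finset L) (hKr : K.card ≤ r) (hKb : bdry A K ⊆ E) :
    (K.card : ℝ) ≤ r / 2 := by
  by_contra h
  push_neg at h
  have h3 := hexp.2.2 K h hKr
  have h4 : ((bdry A K).card : ℝ) ≤ E.card := by exact_mod_cast Finset.card_le_card hKb
  have h5 : c * K.card ≤ c * (r/2) := by nlinarith
  have := le_of_mul_le_mul_left h5 hc
  linarith

/-- In an `(r, Δ, c)`-weak expander, if `|Ext(J)| ≤ cr/2` where
`Ext(J) = J ∪ N(Cl(J))`, then `Cl(Ext(J)) = Cl(J)`. -/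
theorem closure_of_extension (A : L → R → Prop) [∀ a b, Decidable (A a b)]
    (r Δ : ℕ) (c : ℝ) (hc : 0 < c)
    (hexp : IsWeakExpander A r Δ c)
    (J : Finset R) (I : Finset L) (hI : IsClosure A r J I)
    (hext : ((J ∪ nbhd A I).card : ℝ) ≤ c * r / 2)
    (I' : Finset L) (hI' : IsClosure A r (J ∪ nbhd A I) I') :
    I' = I := by
  set E := J ∪ nbhd A I with hEdef
  have hIE : bdry A I ⊆ E := hI.1.2.trans Finset.subset_union_left
  have hIhalf := card_le_half_aux A r Δ c hc hexp E hext I hI.1.1 hIE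
  have hI'half := card_le_half_aux A r Δ c hc hexp E hext I' hI'.1.1 hI'.1.2
  have hUr : (I ∪ I').card ≤ r := by
    have h1 : ((I ∪ I').card : ℝ) ≤ r := by
      have h2 : ((I ∪ I').card : ℝ) ≤ (I.card : ℝ) + I'.card := by
        exact_mod_cast Finset.card_union_le I I'
      linarith
    exact_mod_cast h1
  have hUb : bdry A (I ∪ I') ⊆ E := by
    intro b hb
    simp only [bdry, Finset.mem_filter, Finset.mem_univ, true_and] at hb
    obtain ⟨a, ha⟩ := Finset.card_eq_one.mp hb
    have haA : a ∈ I ∪ I' ∧ A a b := by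
      have := Finset.mem_singleton_self a
      rw [← ha, Finset.mem_filter] at this
      exact this
    by_cases haI : a ∈ I
    · refine Finset.mem_union_right _ ?_
      simp only [nbhd, Finset.mem_filter, Finset.mem_univ, true_and]
      exact ⟨a, haI, haA.2⟩
    · have haI' : a ∈ I' := (Finset.mem_union.mp haA.1).resolve_left haI
      have hsub : I'.filter (fun a => A a b) ⊆ {a} := by
        rw [← ha]; exact Finset.filter_subset_filter _ Finset.subset_union_right
      have hmem : a ∈ I'.filter (fun a => A a b) := Finset.mem_filter.mpr ⟨haI', haA.2⟩
      have heq : I'.filter (fun a => A a b) = {a} :=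
        Finset.Subset.antisymm hsub (Finset.singleton_subset_iff.mpr hmem)
      have : b ∈ bdry A I' := by
        simp only [bdry, Finset.mem_filter, Finset.mem_univ, true_and]
        rw [heq]; simp
      exact hI'.1.2 this
  have hle := hI'.2 (I ∪ I') ⟨hUr, hUb⟩
  have hUeq : I ∪ I' = I' :=
    (Finset.eq_of_subset_of_card_le Finset.subset_union_right hle).symm
  have hsub : I ⊆ I' := hUeq ▸ Finset.subset_union_left
  have hbJ : bdry A I' ⊆ J := by
    intro b hb
    have hbE : b ∈ E := hI'.1.2 hb
    simp only [bdry, Finset.mem_filter, Finset.mem_univ, true_and] at hb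
    obtain ⟨a, ha⟩ := Finset.card_eq_one.mp hb
    by_cases hbN : b ∈ nbhd A I
    · simp only [nbhd, Finset.mem_filter, Finset.mem_univ, true_and] at hbN
      obtain ⟨a₀, ha₀I, ha₀A⟩ := hbN
      have hsub2 : I.filter (fun a => A a b) ⊆ {a} := by
        rw [← ha]; exact Finset.filter_subset_filter _ hsub
      have hmem : a₀ ∈ I.filter (fun a => A a b) := Finset.mem_filter.mpr ⟨ha₀I, ha₀A⟩
      have heq : I.filter (fun a => A a b) = {a} := by
        rcases Finset.subset_singleton_iff.mp hsub2 with h | h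
        · rw [h] at hmem; exact absurd hmem (Finset.notMem_empty _)
        · exact h
      have hbI : b ∈ bdry A I := by
        simp only [bdry, Finset.mem_filter, Finset.mem_univ, true_and]
        rw [heq]; simp
      exact hI.1.2 hbI
    · exact (Finset.mem_union.mp hbE).resolve_right hbN
  have hle2 := hI.2 I' ⟨hI'.1.1, hbJ⟩
  exact (Finset.eq_of_subset_of_card_le hsub hle2).symm
end

section
/- Let G = (L ⊔ R, E) be an (r, Δ, c)-boundary expander and J ⊆ R with |Ext_G(J)| ≤ cr/4. Then the graph G' := G \ Ext_G(J), obtained by deleting the vertices Ext_G(J) from R together with all vertices of L all of whose neighbours lie in Ext_G(J), is an (r, Δ, c/2)-weak expander. -/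
open Finset

variable {L R : Type*} [Fintype L] [Fintype R] [DecidableEq L] [DecidableEq R]

/-- If `G` is an `(r, Δ, c)`-boundary expander, `J ⊆ R` and
`|Ext_G(J)| ≤ cr/4`, then `G' = G \ Ext_G(J)` (with adjacency `A'` avoiding `Ext_G(J)`,
and surviving left vertices those with a neighbour outside `Ext_G(J)`) is an
`(r, Δ, c/2)`-weak expander. -/
theorem deletion_is_weak_expander (A : L → R → Prop) [∀ a b, Decidable (A a b)]
    (r Δ : ℕ) (c : ℝ) (hc : 0 < c)
    (hexp : IsBoundaryExpander A r Δ c)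
    (J : Finset R) (Icl : Finset L) (hIcl : IsClosure A r J Icl)
    (hext : (((J ∪ nbhd A Icl)).card : ℝ) ≤ c * r / 4) :
    -- `A'` is the adjacency of `G' = G \ Ext_G(J)`, `Lset` its surviving left part
    ∀ (A' : L → R → Prop) (_ : ∀ a b, A' a b ↔ A a b ∧ b ∉ J ∪ nbhd A Icl)
      (_ : ∀ a b, Decidable (A' a b))
      (Lset : Finset L) (_ : ∀ a, a ∈ Lset ↔ ∃ b, A a b ∧ b ∉ J ∪ nbhd A Icl),
      (∀ a ∈ Lset, ldeg A' a ≤ Δ) ∧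
      (∀ I : Finset L, I ⊆ Lset → I.Nonempty → (I.card : ℝ) ≤ r / 2 →
        (bdry A' I).Nonempty) ∧
      (∀ I : Finset L, I ⊆ Lset → (r : ℝ) / 2 < I.card → I.card ≤ r →
        c / 2 * I.card ≤ ((bdry A' I).card : ℝ)) := by
  obtain ⟨hdeg, hbd⟩ := hexp
  obtain ⟨⟨hIclr, hIclJ⟩, hmax⟩ := hIcl
  intro A' hA' inst Lset hLset
  set E : Finset R := J ∪ nbhd A Icl with hE
  have hfilt : ∀ (I : Finset L) (b : R), b ∉ E →
      I.filter (fun a => A' a b) = I.filter (fun a => A a b) := by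
    intro I b hb
    apply filter_congr
    intro a _
    simp only [hA' a b, eq_iff_iff]
    tauto
  have hbdry' : ∀ I : Finset L, bdry A' I = (bdry A I) \ E := by
    intro I
    ext b
    simp only [bdry, mem_filter, mem_univ, true_and, mem_sdiff]
    constructor
    · intro h
      have hb : b ∉ E := by
        intro hb
        have h0 : I.filter (fun a => A' a b) = ∅ := by
          apply filter_eq_empty_iff.mpr
          intro a _
          rw [hA' a b]; tauto
        rw [h0] at h; simp at h
      rw [hfilt I b hb] at h
      exact ⟨h, hb⟩
    · rintro ⟨h, hb⟩
      rw [hfilt I b hb]; exact h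
  have hIclcard : (Icl.card : ℝ) ≤ r / 4 := by
    have h1 : c * Icl.card ≤ ((bdry A Icl).card : ℝ) := hbd Icl hIclr
    have h2 : ((bdry A Icl).card : ℝ) ≤ (E.card : ℝ) := by
      exact_mod_cast card_le_card (hIclJ.trans subset_union_left)
    nlinarith [hext]
  have hdisj : ∀ a ∈ Lset, a ∉ Icl := by
    intro a ha haI
    obtain ⟨b, hab, hbE⟩ := (hLset a).mp ha
    exact hbE (mem_union_right _ (by
      simp only [nbhd, mem_filter, mem_univ, true_and]
      exact ⟨a, haI, hab⟩))
  refine ⟨?_, ?_, ?_⟩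
  · intro a _
    refine le_trans ?_ (hdeg a)
    apply card_le_card
    intro b hb
    simp only [mem_filter, mem_univ, true_and] at *
    exact ((hA' a b).mp hb).1
  · intro I hIL hIne hIcard
    by_contra hempty
    rw [not_nonempty_iff_eq_empty, hbdry'] at hempty
    have hsub : bdry A I ⊆ E := by
      intro b hb
      by_contra hbE
      have hmem : b ∈ bdry A I \ E := mem_sdiff.mpr ⟨hb, hbE⟩
      rw [hempty] at hmem; exact absurd hmem (notMem_empty b)
    have hdisj2 : Disjoint Icl I := by
      rw [disjoint_right]; intro a haI; exact hdisj a (hIL haI)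
    have hcardU : (Icl ∪ I).card ≤ r := by
      have hcr : ((Icl ∪ I).card : ℝ) ≤ (r : ℝ) := by
        calc ((Icl ∪ I).card : ℝ) ≤ (Icl.card : ℝ) + (I.card : ℝ) := by
              exact_mod_cast card_union_le Icl I
          _ ≤ r/4 + r/2 := by linarith
          _ ≤ r := by linarith
      exact_mod_cast hcr
    have hbdU : bdry A (Icl ∪ I) ⊆ J := by
      intro b hb
      simp only [bdry, mem_filter, mem_univ, true_and] at hb
      rw [filter_union, card_union_of_disjoint (disjoint_filter_filter hdisj2 )] at hb
      rcases Nat.add_eq_one_iff.mp hb with ⟨h1, h2⟩ | ⟨h2, h1⟩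
      · have hbI : b ∈ bdry A I := by
          simp only [bdry, mem_filter, mem_univ, true_and]; exact h2
        rcases mem_union.mp (hsub hbI) with hJ | hN
        · exact hJ
        · exfalso
          simp only [nbhd, mem_filter, mem_univ, true_and] at hN
          obtain ⟨a, haI, hab⟩ := hN
          have : a ∈ Icl.filter (fun a => A a b) := mem_filter.mpr ⟨haI, hab⟩
          rw [card_eq_zero.mp h1] at this
          exact absurd this (notMem_empty a)
      · exact hIclJ (by simp only [bdry, mem_filter, mem_univ, true_and]; exact h2)
    have hle := hmax (Icl ∪ I) ⟨hcardU, hbdU⟩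
    rw [card_union_of_disjoint hdisj2] at hle
    have := card_pos.mpr hIne
    omega
  · intro I hIL hlow hhigh
    rw [hbdry' I]
    have h1 : c * I.card ≤ ((bdry A I).card : ℝ) := hbd I hhigh
    have h2 : (bdry A I).card ≤ (bdry A I \ E).card + E.card :=
      card_le_card_sdiff_add_card
    have h2' : ((bdry A I).card : ℝ) ≤ ((bdry A I \ E).card : ℝ) + E.card := by
      exact_mod_cast h2
    nlinarith [hext, hlow]
end
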